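/- Proposition 1 (LASSO as a limit of LES): Fix γ > 0 and weights w_k = p_k/p. Assume X^T X is positive definite, so that for each α > 0 the LES objective with λ = γp/α has a unique minimizer β̂^{LES}(α), and the LASSO objective (1/(2n))‖y − Xβ‖₂² + γ Σ_{k=1}^K Σ_{j=1}^{p_k} |β_{kj}| has a unique minimizer β̂^{LASSO}. Then β̂^{LES}(α) − β̂^{LASSO} → 0 as α → 0⁺ (keeping λα/p = γ). -/

import Mathlib

/-- Jensen-type lower bound for log-sum-exp. -/
lemma lse_lower (m : ℕ) (hm : 1 ≤ m) (x : Fin m → ℝ) :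
    Real.log m + (∑ j, x j) / m ≤ Real.log (∑ j, Real.exp (x j)) := by
  have hc : (0:ℝ) < m := by exact_mod_cast hm
  set T := ∑ j, x j with hT
  have key : (m:ℝ) * Real.exp (T / m) ≤ ∑ j, Real.exp (x j) := by
    have h1 : ∀ j : Fin m, Real.exp (T/m) * (1 + (x j - T/m)) ≤ Real.exp (x j) := by
      intro j
      have h := Real.add_one_le_exp (x j - T/m)
      calc Real.exp (T/m) * (1 + (x j - T/m)) ≤ Real.exp (T/m) * Real.exp (x j - T/m) := by
            apply mul_le_mul_of_nonneg_left _ (Real.exp_pos _).le; linarith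
        _ = Real.exp (x j) := by rw [← Real.exp_add]; ring_nf
    calc (m:ℝ) * Real.exp (T/m) = ∑ j : Fin m, Real.exp (T/m) * (1 + (x j - T/m)) := by
          rw [← Finset.mul_sum]
          have : ∑ j : Fin m, (1 + (x j - T/m)) = (m:ℝ) := by
            rw [Finset.sum_add_distrib, Finset.sum_sub_distrib]
            simp [← hT]
            field_simp
            ring
          rw [this]; ring
      _ ≤ ∑ j, Real.exp (x j) := Finset.sum_le_sum fun j _ => h1 j
  have hpos : (0:ℝ) < (m:ℝ) * Real.exp (T / m) := by positivity
  calc Real.log m + T / m = Real.log ((m:ℝ) * Real.exp (T/m)) := by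
        rw [Real.log_mul (ne_of_gt hc) (Real.exp_ne_zero _), Real.log_exp]
    _ ≤ Real.log (∑ j, Real.exp (x j)) := Real.log_le_log hpos key

/-- Upper bound for log-sum-exp. -/
lemma lse_upper (m : ℕ) (hm : 1 ≤ m) (x : Fin m → ℝ) :
    Real.log (∑ j, Real.exp (x j)) ≤ Real.log m + (∑ j, (Real.exp (x j) - 1)) / m := by
  have hc : (0:ℝ) < m := by exact_mod_cast hm
  have hS : (0:ℝ) < ∑ j, Real.exp (x j) := by
    apply Finset.sum_pos (fun j _ => Real.exp_pos _)
    exact Finset.univ_nonempty_iff.mpr (Fin.pos_iff_nonempty.mp hm)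
  have h1 : Real.log (∑ j, Real.exp (x j)) - Real.log m
      = Real.log ((∑ j, Real.exp (x j)) / m) := by
    rw [Real.log_div (ne_of_gt hS) (ne_of_gt hc)]
  have h2 : Real.log ((∑ j, Real.exp (x j)) / m) ≤ (∑ j, Real.exp (x j)) / m - 1 :=
    Real.log_le_sub_one_of_pos (by positivity)
  have h3 : (∑ j, Real.exp (x j)) / m - 1 = (∑ j, (Real.exp (x j) - 1)) / m := by
    rw [Finset.sum_sub_distrib]
    simp
    field_simp
  linarith

set_option maxHeartbeats 1000000 in
/-- **Proposition 1: LASSO as a limit of LES.**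
Fix `γ > 0` and weights `w k = p k / p`.  Assume `XᵀX` is positive definite, so
that for each `α > 0` the LES objective with `λ = γ p / α` (i.e. `λ α / p = γ`)
has a unique minimizer `bLES α`, and the LASSO objective has a unique minimizer
`bLASSO`.  Then `bLES α - bLASSO → 0` as `α → 0⁺`. -/
theorem les_tendsto_lasso (n K : ℕ) (hn : 0 < n) (hK : 0 < K)
    (p : Fin K → ℕ) (hp : ∀ k, 1 ≤ p k)
    (P : ℕ) (hP : P = ∑ k : Fin K, p k)
    (X : Fin n → (Σ k : Fin K, Fin (p k)) → ℝ) (y : Fin n → ℝ)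
    (γ : ℝ) (hγ : 0 < γ)
    (hposdef : ∀ v : (Σ k : Fin K, Fin (p k)) → ℝ, v ≠ 0 →
      0 < ∑ i : Fin n, (∑ j : Σ k : Fin K, Fin (p k), X i j * v j) ^ 2)
    (bLES : ℝ → ((Σ k : Fin K, Fin (p k)) → ℝ)) (bLASSO : (Σ k : Fin K, Fin (p k)) → ℝ)
    (hLES : ∀ α : ℝ, 0 < α → IsMinOn
      (fun β : (Σ k : Fin K, Fin (p k)) → ℝ =>
        (1 / (2 * (n : ℝ))) * ∑ i : Fin n, (y i - ∑ j : Σ k : Fin K, Fin (p k), X i j * β j) ^ 2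
          + (γ * (P : ℝ) / α) * ∑ k : Fin K, ((p k : ℝ) / (P : ℝ)) *
              Real.log (∑ j : Fin (p k), Real.exp (α * |β ⟨k, j⟩|)))
      Set.univ (bLES α))
    (hLASSO : IsMinOn
      (fun β : (Σ k : Fin K, Fin (p k)) → ℝ =>
        (1 / (2 * (n : ℝ))) * ∑ i : Fin n, (y i - ∑ j : Σ k : Fin K, Fin (p k), X i j * β j) ^ 2
          + γ * ∑ j : Σ k : Fin K, Fin (p k), |β j|)
      Set.univ bLASSO) :
    Filter.Tendsto (fun α => bLES α - bLASSO) (nhdsWithin 0 (Set.Ioi 0)) (nhds 0) := by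

  classical
  have hn0 : (0:ℝ) < n := by exact_mod_cast hn
  have hP1 : 0 < P := by
    rw [hP]
    exact Finset.sum_pos (fun k _ => hp k) (Finset.univ_nonempty_iff.mpr ⟨⟨0, hK⟩⟩)
  have hP0 : (0:ℝ) < (P:ℝ) := by exact_mod_cast hP1
  set g : ((Σ k : Fin K, Fin (p k)) → ℝ) → ℝ := fun β =>
    (1 / (2 * (n : ℝ))) * ∑ i : Fin n,
      (y i - ∑ j : Σ k : Fin K, Fin (p k), X i j * β j) ^ 2 with hgdef
  set f : ((Σ k : Fin K, Fin (p k)) → ℝ) → ℝ := fun β =>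
    g β + γ * ∑ j : Σ k : Fin K, Fin (p k), |β j| with hfdef
  have hmin : ∀ β, f bLASSO ≤ f β := fun β => hLASSO (Set.mem_univ β)
  have hg0 : ∀ β, 0 ≤ g β := by
    intro β
    apply mul_nonneg (by positivity)
    exact Finset.sum_nonneg fun i _ => sq_nonneg _
  have hfnorm : ∀ β, γ * ‖β‖ ≤ f β := by
    intro β
    have hnn : (0:ℝ) ≤ ∑ j : Σ k : Fin K, Fin (p k), |β j| :=
      Finset.sum_nonneg fun j _ => abs_nonneg _
    have h1 : ‖β‖ ≤ ∑ j, |β j| := by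
      rw [pi_norm_le_iff_of_nonneg hnn]
      intro j
      rw [Real.norm_eq_abs]
      exact Finset.single_le_sum (f := fun j : Σ k : Fin K, Fin (p k) => |β j|)
        (fun i _ => abs_nonneg _) (Finset.mem_univ j)
    have h2 := mul_le_mul_of_nonneg_left h1 hγ.le
    have := hg0 β
    simp only [hfdef]
    linarith
  have hfcont : Continuous f := by
    apply Continuous.add
    · apply continuous_const.mul
      apply continuous_finset_sum
      intro i _
      exact (continuous_const.sub
        (continuous_finset_sum _ fun j _ => continuous_const.mul (continuous_apply j))).pow 2
    · exact continuous_const.mul (continuous_finset_sum _ fun j _ => (continuous_apply j).abs)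
  clear_value f g
  -- uniqueness of the LASSO minimizer
  have huniq : ∀ β, β ≠ bLASSO → f bLASSO < f β := by
    intro β hne
    by_contra hle
    push_neg at hle
    set w : (Σ k : Fin K, Fin (p k)) → ℝ := fun j => (β j + bLASSO j) / 2 with hw
    have hv : (fun j => β j - bLASSO j) ≠ 0 := by
      intro h
      apply hne
      funext j
      have := congrFun h j
      simpa [sub_eq_zero] using this
    have hQ := hposdef _ hv
    have hLmid : ∀ i, ∑ j, X i j * w j
        = ((∑ j, X i j * β j) + (∑ j, X i j * bLASSO j)) / 2 := by
      intro i
      calc ∑ j, X i j * w j = ∑ j, (X i j * β j + X i j * bLASSO j) / 2 := by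
            apply Finset.sum_congr rfl
            intro j _
            simp only [hw]
            ring
        _ = (∑ j, (X i j * β j + X i j * bLASSO j)) / 2 := by
            rw [Finset.sum_div]
        _ = ((∑ j, X i j * β j) + (∑ j, X i j * bLASSO j)) / 2 := by
            rw [Finset.sum_add_distrib]
    have hLsub : ∀ i, ∑ j, X i j * (β j - bLASSO j)
        = (∑ j, X i j * β j) - (∑ j, X i j * bLASSO j) := by
      intro i
      rw [← Finset.sum_sub_distrib]
      apply Finset.sum_congr rfl
      intro j _
      ring
    have hsq : ∑ i, (y i - ∑ j, X i j * w j) ^ 2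
        = ((∑ i, (y i - ∑ j, X i j * β j) ^ 2)
            + ∑ i, (y i - ∑ j, X i j * bLASSO j) ^ 2) / 2
          - (∑ i, (∑ j, X i j * (β j - bLASSO j)) ^ 2) / 4 := by
      calc ∑ i, (y i - ∑ j, X i j * w j) ^ 2
          = ∑ i, (((y i - ∑ j, X i j * β j) ^ 2 + (y i - ∑ j, X i j * bLASSO j) ^ 2) / 2
              - (∑ j, X i j * (β j - bLASSO j)) ^ 2 / 4) := by
            apply Finset.sum_congr rfl
            intro i _
            rw [hLmid i, hLsub i]
            ring
        _ = _ := by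
            rw [Finset.sum_sub_distrib, ← Finset.sum_div, ← Finset.sum_div,
              Finset.sum_add_distrib]
    have habs : ∑ j, |w j| ≤ ((∑ j, |β j|) + ∑ j, |bLASSO j|) / 2 := by
      calc ∑ j, |w j| ≤ ∑ j, (|β j| + |bLASSO j|) / 2 := by
            apply Finset.sum_le_sum
            intro j _
            simp only [hw]
            calc |(β j + bLASSO j) / 2| = |β j + bLASSO j| / 2 := by
                  rw [abs_div, abs_two]
              _ ≤ (|β j| + |bLASSO j|) / 2 := by
                  linarith [abs_add_le (β j) (bLASSO j)]
        _ = (∑ j, (|β j| + |bLASSO j|)) / 2 := by rw [Finset.sum_div]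
        _ = ((∑ j, |β j|) + ∑ j, |bLASSO j|) / 2 := by rw [Finset.sum_add_distrib]
    have hfw : f w ≤ (f β + f bLASSO) / 2
        - 1 / (8 * (n:ℝ)) * ∑ i, (∑ j, X i j * (β j - bLASSO j)) ^ 2 := by
      have e : (1 / (2 * (n:ℝ))) * ((((∑ i, (y i - ∑ j, X i j * β j) ^ 2)
            + ∑ i, (y i - ∑ j, X i j * bLASSO j) ^ 2) / 2)
          - (∑ i, (∑ j, X i j * (β j - bLASSO j)) ^ 2) / 4)
          = ((1 / (2 * (n:ℝ))) * (∑ i, (y i - ∑ j, X i j * β j) ^ 2)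
              + (1 / (2 * (n:ℝ))) * ∑ i, (y i - ∑ j, X i j * bLASSO j) ^ 2) / 2
            - 1 / (8 * (n:ℝ)) * ∑ i, (∑ j, X i j * (β j - bLASSO j)) ^ 2 := by
        field_simp
        ring
      have habs2 := mul_le_mul_of_nonneg_left habs hγ.le
      simp only [hfdef, hgdef]
      rw [hsq]
      linarith [e]
    have hQ8 : 0 < 1 / (8 * (n:ℝ)) * ∑ i, (∑ j, X i j * (β j - bLASSO j)) ^ 2 := by
      positivity
    have hcontra : f w < f bLASSO := by linarith
    exact absurd (hmin w) (not_le.mpr hcontra)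
  -- the key compactness estimate
  have hkey : ∀ δ : ℝ, 0 < δ → ∃ η > (0:ℝ), ∀ β, f β ≤ f bLASSO + η → dist β bLASSO < δ := by
    intro δ hδ
    set A : Set ((Σ k : Fin K, Fin (p k)) → ℝ) :=
      {β | f β ≤ f bLASSO + 1} ∩ {β | δ ≤ dist β bLASSO} with hA
    have hclosed : IsClosed A :=
      (isClosed_le hfcont continuous_const).inter
        (isClosed_le continuous_const (continuous_id.dist continuous_const))
    have hbdd : Bornology.IsBounded A := by
      apply (Metric.isBounded_closedBall
        (x := (0 : (Σ k : Fin K, Fin (p k)) → ℝ)) (r := (f bLASSO + 1)/γ)).subset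
      intro β hβ
      have hβ1 : f β ≤ f bLASSO + 1 := hβ.1
      have := hfnorm β
      rw [Metric.mem_closedBall, dist_zero_right, le_div_iff₀ hγ]
      nlinarith
    have hcomp : IsCompact A := Metric.isCompact_of_isClosed_isBounded hclosed hbdd
    by_cases hne : A.Nonempty
    · obtain ⟨β₀, hβ₀A, hβ₀⟩ := hcomp.exists_isMinOn hne hfcont.continuousOn
      have hβ₀ne : β₀ ≠ bLASSO := by
        intro h
        have h2 := hβ₀A.2
        rw [h] at h2
        simp only [Set.mem_setOf_eq, dist_self] at h2
        linarith
      have hlt := huniq β₀ hβ₀ne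
      refine ⟨min 1 ((f β₀ - f bLASSO)/2), lt_min one_pos (by linarith), ?_⟩
      intro β hβ
      by_contra hd
      push_neg at hd
      have hβA : β ∈ A := by
        constructor
        · have : min 1 ((f β₀ - f bLASSO)/2) ≤ 1 := min_le_left _ _
          simp only [Set.mem_setOf_eq]
          linarith
        · exact hd
      have h1 : f β₀ ≤ f β := isMinOn_iff.mp hβ₀ β hβA
      have h2 : min 1 ((f β₀ - f bLASSO)/2) ≤ (f β₀ - f bLASSO)/2 := min_le_right _ _
      linarith
    · refine ⟨1, one_pos, ?_⟩
      intro β hβ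
      by_contra hd
      push_neg at hd
      exact hne ⟨β, hβ, hd⟩
  -- bound on the LES minimizer value
  have hbound : ∀ α : ℝ, 0 < α → f (bLES α) ≤ f bLASSO
      + γ * ∑ j : Σ k : Fin K, Fin (p k),
          ((Real.exp (α * |bLASSO j|) - 1) / α - |bLASSO j|) := by
    intro α hα
    set F : ((Σ k : Fin K, Fin (p k)) → ℝ) → ℝ := fun β =>
      g β + (γ * (P : ℝ) / α) * ∑ k : Fin K, ((p k : ℝ) / (P : ℝ)) *
        Real.log (∑ j : Fin (p k), Real.exp (α * |β ⟨k, j⟩|)) with hFdef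
    have hFle : F (bLES α) ≤ F bLASSO := by
      have h := hLES α hα (Set.mem_univ bLASSO)
      simp only [hFdef, hgdef]
      exact h
    clear_value F
    set C : ℝ := ∑ k : Fin K, γ * (p k : ℝ) * Real.log (p k) / α with hC
    clear_value C
    have hlow : ∀ β, f β + C ≤ F β := by
      intro β
      have hk : ∀ k : Fin K, γ * (p k : ℝ) * Real.log (p k) / α
          + γ * ∑ j : Fin (p k), |β ⟨k, j⟩|
          ≤ (γ * (P : ℝ) / α) * (((p k : ℝ) / (P : ℝ)) *
              Real.log (∑ j : Fin (p k), Real.exp (α * |β ⟨k, j⟩|))) := by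
        intro k
        have hpk : (0:ℝ) < (p k : ℝ) := by exact_mod_cast hp k
        have h := lse_lower (p k) (hp k) (fun j => α * |β ⟨k, j⟩|)
        have hsum : (∑ j : Fin (p k), α * |β ⟨k, j⟩|) = α * ∑ j : Fin (p k), |β ⟨k, j⟩| :=
          (Finset.mul_sum _ _ _).symm
        rw [hsum] at h
        have hmul := mul_le_mul_of_nonneg_left h
          (le_of_lt (by positivity : (0:ℝ) < γ * (p k : ℝ) / α))
        calc γ * (p k : ℝ) * Real.log (p k) / α + γ * ∑ j : Fin (p k), |β ⟨k, j⟩|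
            = (γ * (p k : ℝ) / α) * (Real.log (p k)
                + (α * ∑ j : Fin (p k), |β ⟨k, j⟩|) / (p k : ℝ)) := by
              field_simp
          _ ≤ (γ * (p k : ℝ) / α) *
                Real.log (∑ j : Fin (p k), Real.exp (α * |β ⟨k, j⟩|)) := hmul
          _ = (γ * (P : ℝ) / α) * (((p k : ℝ) / (P : ℝ)) *
                Real.log (∑ j : Fin (p k), Real.exp (α * |β ⟨k, j⟩|))) := by
              field_simp
      have hsig : ∑ j : Σ k : Fin K, Fin (p k), |β j|
          = ∑ k : Fin K, ∑ j : Fin (p k), |β ⟨k, j⟩| := Finset.sum_sigma _ _ _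
      have hsum := Finset.sum_le_sum (fun k (_ : k ∈ Finset.univ) => hk k)
      rw [Finset.sum_add_distrib, ← Finset.mul_sum, ← Finset.mul_sum] at hsum
      simp only [hfdef, hFdef]
      rw [hC, hsig]
      linarith
    have hupp : F bLASSO ≤ f bLASSO
        + γ * (∑ j : Σ k : Fin K, Fin (p k),
            ((Real.exp (α * |bLASSO j|) - 1) / α - |bLASSO j|)) + C := by
      have hk : ∀ k : Fin K, (γ * (P : ℝ) / α) * (((p k : ℝ) / (P : ℝ)) *
            Real.log (∑ j : Fin (p k), Real.exp (α * |bLASSO ⟨k, j⟩|)))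
          ≤ γ * (p k : ℝ) * Real.log (p k) / α
            + (γ / α) * ∑ j : Fin (p k), (Real.exp (α * |bLASSO ⟨k, j⟩|) - 1) := by
        intro k
        have hpk : (0:ℝ) < (p k : ℝ) := by exact_mod_cast hp k
        have h := lse_upper (p k) (hp k) (fun j => α * |bLASSO ⟨k, j⟩|)
        have hmul := mul_le_mul_of_nonneg_left h
          (le_of_lt (by positivity : (0:ℝ) < γ * (p k : ℝ) / α))
        calc (γ * (P : ℝ) / α) * (((p k : ℝ) / (P : ℝ)) *
              Real.log (∑ j : Fin (p k), Real.exp (α * |bLASSO ⟨k, j⟩|)))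
            = (γ * (p k : ℝ) / α) *
              Real.log (∑ j : Fin (p k), Real.exp (α * |bLASSO ⟨k, j⟩|)) := by
              field_simp
          _ ≤ (γ * (p k : ℝ) / α) * (Real.log (p k)
              + (∑ j : Fin (p k), (Real.exp (α * |bLASSO ⟨k, j⟩|) - 1)) / (p k : ℝ)) := hmul
          _ = γ * (p k : ℝ) * Real.log (p k) / α
              + (γ / α) * ∑ j : Fin (p k), (Real.exp (α * |bLASSO ⟨k, j⟩|) - 1) := by
              field_simp
      have hsum := Finset.sum_le_sum (fun k (_ : k ∈ Finset.univ) => hk k)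
      rw [Finset.sum_add_distrib, ← Finset.mul_sum, ← Finset.mul_sum] at hsum
      have hsig : ∑ j : Σ k : Fin K, Fin (p k), (Real.exp (α * |bLASSO j|) - 1)
          = ∑ k : Fin K, ∑ j : Fin (p k), (Real.exp (α * |bLASSO ⟨k, j⟩|) - 1) :=
        Finset.sum_sigma _ _ _
      rw [← hsig] at hsum
      have hα0 : α ≠ 0 := ne_of_gt hα
      have hsub : ∑ j : Σ k : Fin K, Fin (p k),
            ((Real.exp (α * |bLASSO j|) - 1) / α - |bLASSO j|)
          = (∑ j : Σ k : Fin K, Fin (p k), (Real.exp (α * |bLASSO j|) - 1)) / α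
            - ∑ j : Σ k : Fin K, Fin (p k), |bLASSO j| := by
        rw [Finset.sum_sub_distrib, Finset.sum_div]
      have heq : g bLASSO + (γ / α) * ∑ j : Σ k : Fin K, Fin (p k),
            (Real.exp (α * |bLASSO j|) - 1)
          = f bLASSO + γ * (∑ j : Σ k : Fin K, Fin (p k),
              ((Real.exp (α * |bLASSO j|) - 1) / α - |bLASSO j|)) := by
        simp only [hfdef]
        rw [hsub]
        ring
      simp only [hFdef]
      rw [hC]
      linarith
    have h1 := hlow (bLES α)
    linarith
  -- the error term tends to zero
  have hεt : Filter.Tendsto (fun α : ℝ => γ * ∑ j : Σ k : Fin K, Fin (p k),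
      ((Real.exp (α * |bLASSO j|) - 1) / α - |bLASSO j|))
      (nhdsWithin 0 (Set.Ioi 0)) (nhds 0) := by
    have hj : ∀ j : Σ k : Fin K, Fin (p k),
        Filter.Tendsto (fun α : ℝ => (Real.exp (α * |bLASSO j|) - 1) / α - |bLASSO j|)
          (nhdsWithin 0 (Set.Ioi 0)) (nhds 0) := by
      intro j
      have hd : HasDerivAt (fun t : ℝ => Real.exp (t * |bLASSO j|)) |bLASSO j| 0 := by
        have h1 := (Real.hasDerivAt_exp (0 * |bLASSO j|)).comp 0
          (hasDerivAt_mul_const |bLASSO j|)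
        simpa [Function.comp_def] using h1
      have hs := hasDerivAt_iff_tendsto_slope.mp hd
      have hmono : nhdsWithin (0:ℝ) (Set.Ioi 0) ≤ nhdsWithin (0:ℝ) {(0:ℝ)}ᶜ :=
        nhdsWithin_mono 0 fun x hx => ne_of_gt hx
      have hs2 := (hs.mono_left hmono).sub_const |bLASSO j|
      rw [sub_self] at hs2
      apply Filter.Tendsto.congr' _ hs2
      filter_upwards [self_mem_nhdsWithin] with α hα
      have hα0 : α ≠ 0 := ne_of_gt hα
      simp [slope_def_field, Real.exp_zero, hα0]
    have hsum : Filter.Tendsto (fun α : ℝ => ∑ j : Σ k : Fin K, Fin (p k),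
        ((Real.exp (α * |bLASSO j|) - 1) / α - |bLASSO j|))
        (nhdsWithin 0 (Set.Ioi 0)) (nhds 0) := by
      simpa using tendsto_finset_sum Finset.univ fun j (_ : j ∈ Finset.univ) => hj j
    simpa using hsum.const_mul γ
  -- conclude
  rw [tendsto_sub_nhds_zero_iff]
  rw [Metric.tendsto_nhds]
  intro δ hδ
  obtain ⟨η, hη, hball⟩ := hkey δ hδ
  have h1 : ∀ᶠ α in nhdsWithin (0:ℝ) (Set.Ioi 0),
      γ * ∑ j : Σ k : Fin K, Fin (p k),
        ((Real.exp (α * |bLASSO j|) - 1) / α - |bLASSO j|) < η :=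
    hεt.eventually (eventually_lt_nhds hη)
  filter_upwards [h1, self_mem_nhdsWithin] with α hα1 hα2
  apply hball
  have h2 := hbound α hα2
  linarith
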